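/- Let d ≥ 1 and n ≥ 1. Let Ā⁰ be a symmetric positive definite n×n real matrix, let Ā¹, …, Ā^d be symmetric n×n real matrices, let N be an n×n real matrix, and fix positive reals ε₀, …, ε_{n−1}. For ω in the unit sphere S^{d−1} of ℝ^d set M_ω := (Ā⁰)⁻¹ Σ_{j=1}^d ω_j Ā^j. Then the infimum N̄ := inf{ Σ_{k=0}^{n−1} ε_k |N M_ω^k x|² : x ∈ S^{n−1}, ω ∈ S^{d−1} } is strictly positive if and only if for every ω ∈ S^{d−1}, every φ ∈ ℝⁿ and every λ ∈ ℝ satisfying Nφ = 0 and λφ + M_ω φ = 0, one has φ = 0. -/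

import Mathlib

open Matrix Finset

section Aux

lemma mulVec_sum' {m : Type*} [Fintype m] (A : Matrix m m ℝ) {ι : Type*} (s : Finset ι)
    (f : ι → m → ℝ) : A *ᵥ (∑ j ∈ s, f j) = ∑ j ∈ s, A *ᵥ f j := by
  simp only [← Matrix.mulVecLin_apply, map_sum]

lemma eig_pow' {n : ℕ} (M : Matrix (Fin n) (Fin n) ℝ) (φ : Fin n → ℝ) (t : ℝ)
    (h : M *ᵥ φ = t • φ) (k : ℕ) : M ^ k *ᵥ φ = t ^ k • φ := by
  induction k with
  | zero => simp
  | succ k ih => rw [pow_succ', ← Matrix.mulVec_mulVec, ih, Matrix.mulVec_smul, h,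
      smul_smul, ← pow_succ]

open scoped MatrixOrder in
lemma sk_core (n : ℕ) (hn : 1 ≤ n) (A0 B N : Matrix (Fin n) (Fin n) ℝ)
    (hA0 : A0.PosDef) (hB : B.IsSymm)
    (SK : ∀ (φ : Fin n → ℝ) (lam : ℝ), N.mulVec φ = 0 →
        lam • φ + (A0⁻¹ * B).mulVec φ = 0 → φ = 0)
    (x : Fin n → ℝ) (hx : x ≠ 0)
    (hker : ∀ k : Fin n, (N * (A0⁻¹ * B) ^ (k : ℕ)).mulVec x = 0) : False := by
  classical
  set C : Matrix (Fin n) (Fin n) ℝ := CFC.sqrt A0 with hCdef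
  have hCC : C * C = A0 := CFC.sqrt_mul_sqrt_self A0 hA0.posSemidef.nonneg
  have hCherm : C.IsHermitian := (Matrix.nonneg_iff_posSemidef.1 (CFC.sqrt_nonneg A0)).1
  have hdetA0 : IsUnit A0.det := isUnit_iff_ne_zero.2 (ne_of_gt hA0.det_pos)
  have hdetC : IsUnit C.det := by
    have : C.det * C.det = A0.det := by rw [← det_mul, hCC]
    refine isUnit_iff_ne_zero.2 fun h => ?_
    rw [h, mul_zero] at this
    exact (isUnit_iff_ne_zero.1 hdetA0) this.symm
  have hCinv : C⁻¹ * C = 1 := nonsing_inv_mul C hdetC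
  set M : Matrix (Fin n) (Fin n) ℝ := A0⁻¹ * B with hMdef
  set S : Matrix (Fin n) (Fin n) ℝ := C⁻¹ * B * C⁻¹ with hSdef
  have hCsymm : Cᵀ = C := by
    have := hCherm; rwa [Matrix.IsHermitian, conjTranspose_eq_transpose_of_trivial] at this
  have hS : S.IsHermitian := by
    rw [Matrix.IsHermitian, conjTranspose_eq_transpose_of_trivial, hSdef,
      transpose_mul, transpose_mul, transpose_nonsing_inv, hCsymm, hB.eq, mul_assoc]
  have hA0inv : A0⁻¹ = C⁻¹ * C⁻¹ := by rw [← hCC, Matrix.mul_inv_rev]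
  have hMC : M * C⁻¹ = C⁻¹ * S := by
    rw [hMdef, hSdef, hA0inv]; noncomm_ring
  set v : Fin n → EuclideanSpace ℝ (Fin n) := fun j => hS.eigenvectorBasis j with hvdef
  set μ : Fin n → ℝ := hS.eigenvalues with hμdef
  have heig : ∀ j, S *ᵥ ⇑(v j) = μ j • ⇑(v j) := fun j => hS.mulVec_eigenvectorBasis j
  set c : Fin n → ℝ := fun j => hS.eigenvectorBasis.repr ((WithLp.equiv 2 _).symm (C *ᵥ x)) j
    with hcdef
  set w : Fin n → (Fin n → ℝ) := fun j => c j • (C⁻¹ *ᵥ ⇑(v j)) with hwdef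
  have hsumw : ∑ j, w j = x := by
    have h1 : ∑ j, c j • (v j) = (WithLp.equiv 2 _).symm (C *ᵥ x) :=
      hS.eigenvectorBasis.sum_repr _
    have h2 : ∑ j, c j • ⇑(v j) = C *ᵥ x := by
      have h3 := congrArg (WithLp.linearEquiv 2 ℝ (Fin n → ℝ)) h1
      rw [map_sum] at h3
      simpa [WithLp.linearEquiv] using h3
    calc ∑ j, w j = C⁻¹ *ᵥ (C *ᵥ x) := by
          rw [← h2, mulVec_sum']
          refine Finset.sum_congr rfl fun j _ => ?_
          rw [hwdef]
          simp [Matrix.mulVec_smul]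
      _ = x := by rw [Matrix.mulVec_mulVec, hCinv, one_mulVec]
  have hweig : ∀ j, M *ᵥ w j = μ j • w j := by
    intro j
    show M *ᵥ (c j • (C⁻¹ *ᵥ ⇑(v j))) = μ j • (c j • (C⁻¹ *ᵥ ⇑(v j)))
    rw [Matrix.mulVec_smul, Matrix.mulVec_mulVec, hMC, ← Matrix.mulVec_mulVec, heig j,
      Matrix.mulVec_smul, smul_comm]
  have hwk : ∀ (k : ℕ) (j : Fin n), M ^ k *ᵥ w j = μ j ^ k • w j :=
    fun k j => eig_pow' M (w j) (μ j) (hweig j) k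
  have hNk : ∀ k : Fin n, ∑ j, μ j ^ (k : ℕ) • (N *ᵥ w j) = 0 := by
    intro k
    have e1 : M ^ (k : ℕ) *ᵥ x = ∑ j, μ j ^ (k : ℕ) • w j := by
      rw [← hsumw, mulVec_sum']
      exact Finset.sum_congr rfl fun j _ => hwk _ j
    have e2 : N *ᵥ (M ^ (k : ℕ) *ᵥ x) = 0 := by
      rw [Matrix.mulVec_mulVec]; exact hker k
    rw [e1, mulVec_sum'] at e2
    rw [← e2]
    exact Finset.sum_congr rfl fun j _ => (Matrix.mulVec_smul _ _ _).symm
  have key : ∀ t : ℝ, ∑ j ∈ univ.filter (fun j => μ j = t), w j = 0 := by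
    intro t
    set s : Finset ℝ := Finset.image μ univ with hsdef
    set p : Polynomial ℝ := Lagrange.interpolate s id (fun y => if y = t then 1 else 0) with hpdef
    have hps : ∀ j, p.eval (μ j) = if μ j = t then 1 else 0 := by
      intro j
      have hmem : μ j ∈ s := Finset.mem_image_of_mem μ (mem_univ j)
      have h := Lagrange.eval_interpolate_at_node (v := id)
        (r := fun y => if y = t then 1 else 0) (Set.injOn_id _) hmem
      simpa only [id_eq] using h
    have hdeg : p.natDegree < n := by
      by_cases hp0 : p = 0
      · rw [hp0]; simpa using (show 0 < n by omega)
      · have h1 : p.degree < s.card := Lagrange.degree_interpolate_lt _ (Set.injOn_id _)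
        have h2 : s.card ≤ n := by
          calc s.card ≤ (univ : Finset (Fin n)).card := Finset.card_image_le
            _ = n := by simp
        have h3 : (s.card : WithBot ℕ) ≤ (n : WithBot ℕ) := by exact_mod_cast h2
        exact (Polynomial.natDegree_lt_iff_degree_lt hp0).2 (lt_of_lt_of_le h1 h3)
    have hNφ : N *ᵥ (∑ j ∈ univ.filter (fun j => μ j = t), w j) = 0 := by
      rw [mulVec_sum']
      have step1 : ∑ j ∈ univ.filter (fun j => μ j = t), N *ᵥ w j
          = ∑ j, p.eval (μ j) • (N *ᵥ w j) := by
        rw [Finset.sum_filter]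
        refine Finset.sum_congr rfl fun j _ => ?_
        rw [hps j]
        by_cases h : μ j = t <;> simp [h]
      rw [step1]
      have step2 : ∀ j : Fin n, p.eval (μ j) • (N *ᵥ w j)
          = ∑ k ∈ Finset.range n, p.coeff k • (μ j ^ k • (N *ᵥ w j)) := by
        intro j
        rw [Polynomial.eval_eq_sum_range' hdeg, Finset.sum_smul]
        refine Finset.sum_congr rfl fun k _ => ?_
        rw [smul_smul]
      simp_rw [step2]
      rw [Finset.sum_comm]
      refine Finset.sum_eq_zero fun k hk => ?_
      rw [← Finset.smul_sum]
      have hkn : k < n := Finset.mem_range.1 hk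
      have h := hNk ⟨k, hkn⟩
      simp only at h
      rw [h, smul_zero]
    have hMφ : (-t) • (∑ j ∈ univ.filter (fun j => μ j = t), w j)
        + M *ᵥ (∑ j ∈ univ.filter (fun j => μ j = t), w j) = 0 := by
      rw [mulVec_sum']
      have h : ∑ j ∈ univ.filter (fun j => μ j = t), M *ᵥ w j
          = t • ∑ j ∈ univ.filter (fun j => μ j = t), w j := by
        rw [Finset.smul_sum]
        refine Finset.sum_congr rfl fun j hj => ?_
        rw [hweig j, (Finset.mem_filter.1 hj).2]
      rw [h, neg_smul, neg_add_cancel]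
    exact SK _ (-t) hNφ hMφ
  apply hx
  rw [← hsumw, ← Finset.sum_fiberwise_of_maps_to
    (fun j (_ : j ∈ (univ : Finset (Fin n))) => Finset.mem_image_of_mem μ (mem_univ j)) w]
  exact Finset.sum_eq_zero fun t _ => key t

lemma isCompact_sphere' (m : ℕ) : IsCompact {x : Fin m → ℝ | ∑ i, (x i) ^ 2 = 1} := by
  refine Metric.isCompact_of_isClosed_isBounded
    (isClosed_eq (continuous_finset_sum _ fun i _ => (continuous_apply i).pow 2)
      continuous_const) ?_
  refine (Metric.isBounded_closedBall (x := (0 : Fin m → ℝ)) (r := 1)).subset fun x hx => ?_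
  rw [Metric.mem_closedBall, dist_zero_right]
  refine (pi_norm_le_iff_of_nonneg zero_le_one).2 fun i => ?_
  have h1 : (x i) ^ 2 ≤ 1 := by
    rw [← hx]
    exact Finset.single_le_sum (fun j _ => sq_nonneg (x j)) (mem_univ i)
  calc ‖x i‖ = Real.sqrt ((x i) ^ 2) := by rw [Real.sqrt_sq_eq_abs]; rfl
    _ ≤ Real.sqrt 1 := Real.sqrt_le_sqrt h1
    _ = 1 := Real.sqrt_one

lemma sphere_nonempty' (m : ℕ) (hm : 1 ≤ m) : ∃ x : Fin m → ℝ, ∑ i, (x i) ^ 2 = 1 := by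
  refine ⟨Pi.single ⟨0, hm⟩ 1, ?_⟩
  simp [Pi.single_apply, sq, ite_and]

end Aux

/-- The Euclidean norm on `Fin n → ℝ`. -/
noncomputable def eNorm {n : ℕ} (x : Fin n → ℝ) : ℝ := Real.sqrt (∑ i, (x i) ^ 2)

lemma eNorm_sq {n : ℕ} (x : Fin n → ℝ) : eNorm x ^ 2 = ∑ i, (x i) ^ 2 :=
  Real.sq_sqrt (Finset.sum_nonneg fun i _ => sq_nonneg _)

lemma eNorm_zero {n : ℕ} : eNorm (0 : Fin n → ℝ) = 0 := by simp [eNorm]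


/-- Positivity of the infimum `N̄ = inf { ∑_k ε_k |N M_ω^k x|² : |x| = 1, |ω| = 1 }`
(with `M_ω = (Ā⁰)⁻¹ ∑_j ω_j Ā^j`) is equivalent to the Shizuta–Kawashima condition
for every direction `ω` on the unit sphere. -/
theorem stmt4 (d n : ℕ) (hd : 1 ≤ d) (hn : 1 ≤ n)
    (A0 : Matrix (Fin n) (Fin n) ℝ) (hA0 : A0.PosDef)
    (A : Fin d → Matrix (Fin n) (Fin n) ℝ) (hA : ∀ j, (A j).IsSymm)
    (N : Matrix (Fin n) (Fin n) ℝ)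
    (ε : Fin n → ℝ) (hε : ∀ k, 0 < ε k) :
    (0 < sInf { s : ℝ | ∃ (x : Fin n → ℝ) (ω : Fin d → ℝ),
        (∑ i, (x i) ^ 2 = 1) ∧ (∑ j, (ω j) ^ 2 = 1) ∧
        s = ∑ k : Fin n,
          ε k * (eNorm ((N * (A0⁻¹ * ∑ j, ω j • A j) ^ (k : ℕ)).mulVec x)) ^ 2 })
    ↔
    (∀ ω : Fin d → ℝ, (∑ j, (ω j) ^ 2 = 1) →
      ∀ (φ : Fin n → ℝ) (lam : ℝ), N.mulVec φ = 0 →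
        lam • φ + (A0⁻¹ * ∑ j, ω j • A j).mulVec φ = 0 → φ = 0) := by
  classical
  set F : (Fin n → ℝ) × (Fin d → ℝ) → ℝ := fun p => ∑ k : Fin n,
    ε k * (eNorm ((N * (A0⁻¹ * ∑ j, p.2 j • A j) ^ (k : ℕ)).mulVec p.1)) ^ 2 with hFdef
  set Kx : Set (Fin n → ℝ) := {x | ∑ i, (x i) ^ 2 = 1} with hKxdef
  set Kω : Set (Fin d → ℝ) := {ω | ∑ j, (ω j) ^ 2 = 1} with hKωdef
  have hSeq : { s : ℝ | ∃ (x : Fin n → ℝ) (ω : Fin d → ℝ),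
      (∑ i, (x i) ^ 2 = 1) ∧ (∑ j, (ω j) ^ 2 = 1) ∧
      s = ∑ k : Fin n,
        ε k * (eNorm ((N * (A0⁻¹ * ∑ j, ω j • A j) ^ (k : ℕ)).mulVec x)) ^ 2 }
      = F '' (Kx ×ˢ Kω) := by
    ext s
    constructor
    · rintro ⟨x, ω, hx, hω, rfl⟩
      exact ⟨(x, ω), ⟨hx, hω⟩, rfl⟩
    · rintro ⟨⟨x, ω⟩, ⟨hx, hω⟩, rfl⟩
      exact ⟨x, ω, hx, hω, rfl⟩
  rw [hSeq]
  have hF0 : ∀ p, 0 ≤ F p :=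
    fun p => Finset.sum_nonneg fun k _ => mul_nonneg (hε k).le (sq_nonneg _)
  have hbdd : BddBelow (F '' (Kx ×ˢ Kω)) := by
    refine ⟨0, fun s hs => ?_⟩
    obtain ⟨p, _, rfl⟩ := hs
    exact hF0 p
  constructor
  · intro hpos ω hω φ lam hNφ hlam
    by_contra hφ
    have hsum_pos : 0 < ∑ i, (φ i) ^ 2 := by
      have hex : ∃ i, φ i ≠ 0 := by
        by_contra h; push_neg at h; exact hφ (funext h)
      obtain ⟨i, hi⟩ := hex
      exact Finset.sum_pos' (fun j _ => sq_nonneg _) ⟨i, mem_univ i, by positivity⟩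
    set r := Real.sqrt (∑ i, (φ i) ^ 2) with hrdef
    have hr : 0 < r := Real.sqrt_pos.2 hsum_pos
    have hr2 : r ^ 2 = ∑ i, (φ i) ^ 2 := Real.sq_sqrt hsum_pos.le
    set x : Fin n → ℝ := r⁻¹ • φ with hxdef
    have hx1 : ∑ i, (x i) ^ 2 = 1 := by
      simp only [hxdef, Pi.smul_apply, smul_eq_mul, mul_pow, ← Finset.mul_sum]
      rw [← hr2]
      field_simp
    have hMφ : (A0⁻¹ * ∑ j, ω j • A j) *ᵥ φ = (-lam) • φ := by
      have h := hlam
      rw [add_comm, add_eq_zero_iff_eq_neg] at h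
      rw [h, neg_smul]
    have hzero : ∀ k : Fin n, (N * (A0⁻¹ * ∑ j, ω j • A j) ^ (k : ℕ)) *ᵥ x = 0 := by
      intro k
      rw [← Matrix.mulVec_mulVec, hxdef, Matrix.mulVec_smul,
        eig_pow' _ _ _ hMφ (k : ℕ), Matrix.mulVec_smul, Matrix.mulVec_smul, hNφ]
      simp
    have h0mem : (0 : ℝ) ∈ F '' (Kx ×ˢ Kω) := by
      refine ⟨(x, ω), ⟨hx1, hω⟩, ?_⟩
      show F (x, ω) = 0
      rw [hFdef]
      refine Finset.sum_eq_zero fun k _ => ?_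
      show ε k * (eNorm ((N * (A0⁻¹ * ∑ j, ω j • A j) ^ (k : ℕ)).mulVec x)) ^ 2 = 0
      rw [hzero k, eNorm_zero]
      ring
    have hle : sInf (F '' (Kx ×ˢ Kω)) ≤ 0 := csInf_le hbdd h0mem
    linarith
  · intro hSK
    obtain ⟨x0, hx0⟩ := sphere_nonempty' n hn
    obtain ⟨ω0, hω0⟩ := sphere_nonempty' d hd
    have hKne : (Kx ×ˢ Kω).Nonempty := ⟨(x0, ω0), ⟨hx0, hω0⟩⟩
    have contF : Continuous F := by
      have contM : Continuous fun ω : Fin d → ℝ => A0⁻¹ * ∑ j, ω j • A j := by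
        refine Continuous.matrix_mul continuous_const (continuous_finset_sum _ fun j _ => ?_)
        exact continuous_matrix fun i l => ((continuous_apply j).mul continuous_const)
      have contMk : ∀ k : ℕ, Continuous fun ω : Fin d → ℝ => (A0⁻¹ * ∑ j, ω j • A j) ^ k := by
        intro k
        induction k with
        | zero => simpa using continuous_const
        | succ k ih => simp_rw [pow_succ]; exact ih.matrix_mul contM
      refine continuous_finset_sum _ fun k _ => Continuous.mul continuous_const ?_
      have he : (fun p : (Fin n → ℝ) × (Fin d → ℝ) =>
          (eNorm ((N * (A0⁻¹ * ∑ j, p.2 j • A j) ^ (k : ℕ)).mulVec p.1)) ^ 2)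
          = fun p => ∑ i, (((N * (A0⁻¹ * ∑ j, p.2 j • A j) ^ (k : ℕ)).mulVec p.1) i) ^ 2 :=
        funext fun p => eNorm_sq _
      rw [he]
      refine continuous_finset_sum _ fun i _ => Continuous.pow ?_ 2
      exact (continuous_apply i).comp
        ((Continuous.matrix_mul continuous_const
          ((contMk (k : ℕ)).comp continuous_snd)).matrix_mulVec continuous_fst)
    obtain ⟨p₀, hp₀K, hmin⟩ :=
      ((isCompact_sphere' n).prod (isCompact_sphere' d)).exists_isMinOn hKne contF.continuousOn
    have hFpos : 0 < F p₀ := by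
      rcases (hF0 p₀).lt_or_eq with h | h
      · exact h
      · exfalso
        have heq0 : F p₀ = 0 := h.symm
        have hzero : ∀ k : Fin n, (N * (A0⁻¹ * ∑ j, p₀.2 j • A j) ^ (k : ℕ)).mulVec p₀.1 = 0 := by
          intro k
          have hterm := (Finset.sum_eq_zero_iff_of_nonneg
            (fun k _ => mul_nonneg (hε k).le (sq_nonneg
              (eNorm ((N * (A0⁻¹ * ∑ j, p₀.2 j • A j) ^ (k : ℕ)).mulVec p₀.1))))).1 heq0
            k (mem_univ k)
          have h2 : (eNorm ((N * (A0⁻¹ * ∑ j, p₀.2 j • A j) ^ (k : ℕ)).mulVec p₀.1)) ^ 2 = 0 := by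
            rcases mul_eq_zero.1 hterm with h' | h'
            · exact absurd h' (ne_of_gt (hε k))
            · exact h'
          rw [eNorm_sq] at h2
          funext i
          have h3 := (Finset.sum_eq_zero_iff_of_nonneg (fun i _ => sq_nonneg _)).1 h2 i (mem_univ i)
          exact pow_eq_zero_iff two_ne_zero |>.mp h3
        have hBsymm : (∑ j, p₀.2 j • A j).IsSymm := by
          show (∑ j, p₀.2 j • A j)ᵀ = ∑ j, p₀.2 j • A j
          rw [Matrix.transpose_sum]
          exact Finset.sum_congr rfl fun j _ => by rw [Matrix.transpose_smul, (hA j).eq]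
        have hxne : p₀.1 ≠ 0 := by
          intro h0
          have h1 : ∑ i, (p₀.1 i) ^ 2 = 1 := hp₀K.1
          rw [h0] at h1
          simp at h1
        exact sk_core n hn A0 (∑ j, p₀.2 j • A j) N hA0 hBsymm
          (hSK p₀.2 hp₀K.2) p₀.1 hxne hzero
    have hge : F p₀ ≤ sInf (F '' (Kx ×ˢ Kω)) := by
      refine le_csInf ⟨F p₀, ⟨p₀, hp₀K, rfl⟩⟩ fun b hb => ?_
      obtain ⟨p, hpK, rfl⟩ := hb
      exact hmin hpK
    linarith
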